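/- Let (a_j)_{j≥0} be the real sequence defined by a₀ = 1, a₁ = −1/2, and for j ≥ 2 by the recursion −2j·a_j = (4 − 2j)·a_{j−1} + Σ_{k=1}^{j−1} a_k·a_{j−k}. Then for every j ≥ 2 one has −a_j ≥ 1/(8·j·(j−1)), i.e. setting b_j = −a_j, it holds that b_j ≥ (1/8)·(1/(j−1) − 1/j). -/

import Mathlib

/-- Let `(a_j)` satisfy `a₀ = 1`, `a₁ = −1/2`, and for `j ≥ 2`
`−2j·a_j = (4 − 2j)·a_{j−1} + Σ_{k=1}^{j−1} a_k·a_{j−k}`. Then for every `j ≥ 2`,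
`−a_j ≥ 1/(8·j·(j−1))`, i.e. with `b_j = −a_j`, `b_j ≥ (1/8)(1/(j−1) − 1/j)`. -/
theorem coeffs_lower_bound (a : ℕ → ℝ)
    (h0 : a 0 = 1) (h1 : a 1 = -1/2)
    (hrec : ∀ j : ℕ, 2 ≤ j →
      -(2 * (j : ℝ)) * a j = (4 - 2 * (j : ℝ)) * a (j - 1)
        + ∑ k ∈ Finset.Ico 1 j, a k * a (j - k)) :
    ∀ j : ℕ, 2 ≤ j → -a j ≥ 1 / (8 * (j : ℝ) * ((j : ℝ) - 1)) := by
  intro j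
  induction j using Nat.strong_induction_on with
  | _ j ih =>
  intro hj
  -- nonnegativity of -a k for 1 ≤ k < j
  have hnn : ∀ k, 1 ≤ k → k < j → 0 ≤ -a k := by
    intro k hk1 hkj
    rcases eq_or_lt_of_le hk1 with h | h
    · rw [← h, h1]; norm_num
    · have h2 : 2 ≤ k := h
      have hb := ih k hkj h2
      have hk2 : (2 : ℝ) ≤ (k : ℝ) := by exact_mod_cast h2
      have hpos : 0 < 8 * (k : ℝ) * ((k : ℝ) - 1) := by nlinarith
      have : 0 < 1 / (8 * (k : ℝ) * ((k : ℝ) - 1)) := by positivity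
      linarith
  rcases eq_or_lt_of_le hj with h2 | h3
  · -- j = 2
    have heq := hrec 2 (by norm_num)
    have : Finset.Ico 1 2 = {1} := by decide
    rw [this] at heq
    simp [h1] at heq
    rw [← h2]
    push_cast
    norm_num
    linarith
  · -- j ≥ 3
    have hj3 : 3 ≤ j := h3
    have heq := hrec j hj
    have hn3 : (3 : ℝ) ≤ (j : ℝ) := by exact_mod_cast hj3
    set n : ℝ := (j : ℝ) with hn
    -- cast of j - 1
    have hcast : ((j - 1 : ℕ) : ℝ) = n - 1 := by
      rw [Nat.cast_sub (by omega)]; norm_num; exact hn.symm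
    -- induction bound for j - 1
    have hb1 := ih (j - 1) (by omega) (by omega)
    rw [hcast] at hb1
    set c : ℝ := -a (j - 1) with hc
    have hc0 : 0 ≤ c := hnn (j - 1) (by omega) (by omega)
    have hden : (0 : ℝ) < 8 * (n - 1) * (n - 1 - 1) := by nlinarith
    have hcc : 1 ≤ c * (8 * (n - 1) * (n - 1 - 1)) := by
      rw [ge_iff_le, div_le_iff₀ hden] at hb1
      linarith
    -- sum lower bound
    have hsub : ({1, j - 1} : Finset ℕ) ⊆ Finset.Ico 1 j := by
      intro x hx
      simp only [Finset.mem_insert, Finset.mem_singleton] at hx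
      rcases hx with rfl | rfl <;> simp [Finset.mem_Ico] <;> omega
    have hterm : ∀ i ∈ Finset.Ico 1 j, 0 ≤ a i * a (j - i) := by
      intro i hi
      rw [Finset.mem_Ico] at hi
      have h1' : 0 ≤ -a i := hnn i hi.1 hi.2
      have h2' : 0 ≤ -a (j - i) := hnn (j - i) (by omega) (by omega)
      nlinarith
    have hsum : ∑ k ∈ Finset.Ico 1 j, a k * a (j - k) ≥
        ∑ k ∈ ({1, j - 1} : Finset ℕ), a k * a (j - k) := by
      apply Finset.sum_le_sum_of_subset_of_nonneg hsub
      intro i hi _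
      exact hterm i hi
    have hne : (1 : ℕ) ≠ j - 1 := by omega
    have hjj : j - (j - 1) = 1 := by omega
    have hpair : ∑ k ∈ ({1, j - 1} : Finset ℕ), a k * a (j - k) = c := by
      rw [Finset.sum_pair hne, hjj]
      rw [h1, hc]
      ring
    rw [hpair] at hsum
    -- main estimate: 2n * (-a j) ≥ (2n - 3) * c
    have hkey : 2 * n * (-a j) ≥ (2 * n - 3) * c := by
      have : -(2 * n) * a j = (4 - 2 * n) * c * (-1) + ∑ k ∈ Finset.Ico 1 j, a k * a (j - k) := by
        rw [heq, hc]; ring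
      nlinarith [hsum]
    -- conclude
    rw [ge_iff_le, div_le_iff₀ (by nlinarith : (0:ℝ) < 8 * n * (n - 1))]
    nlinarith [mul_le_mul_of_nonneg_left hkey (by linarith : (0:ℝ) ≤ 4 * (n - 1)),
      mul_nonneg hc0 (by linarith : (0:ℝ) ≤ n - 1)]
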